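/- Let 0 < S₀ < S₁ and define S_opt : [0,1] → ℝ by S_opt(x) = S₀ for 0 ≤ x ≤ 1/2, S_opt(x) = S₀/(2(1−x)) for 1/2 < x < 1 − S₀/(2S₁), and S_opt(x) = S₁ for 1 − S₀/(2S₁) ≤ x ≤ 1. If S : [0,1] → ℝ is measurable with S₀ ≤ S(x) ≤ S₁ for all x and (1/2)·(∫₀¹ S dx)² = (1 + (1/2)·log(S₁/S₀)) · ∫₀¹ (1−x)·S(x)² dx, then S(x) = S_opt(x) for almost every x ∈ [0,1]. -/

import Mathlib

open MeasureTheory intervalIntegral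

/-- The optimal Seebeck profile. -/
noncomputable def Sopt (S₀ S₁ : ℝ) (x : ℝ) : ℝ :=
  if x ≤ 1/2 then S₀
  else if x < 1 - S₀ / (2 * S₁) then S₀ / (2 * (1 - x))
  else S₁

noncomputable def Topt (S₀ S₁ t M : ℝ) (x : ℝ) : ℝ :=
  if x ≤ 1 - t / (2*M*S₀) then S₀
  else if x < 1 - t / (2*M*S₁) then t / (2*M*(1-x))
  else S₁

lemma Topt_measurable (S₀ S₁ t M : ℝ) : Measurable (Topt S₀ S₁ t M) := by
  unfold Topt
  apply Measurable.ite (measurableSet_le measurable_id measurable_const) measurable_const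
  apply Measurable.ite (measurableSet_lt measurable_id measurable_const) _ measurable_const
  exact measurable_const.div (by fun_prop)

lemma intervalIntegrable_of_bdd {f : ℝ → ℝ} {a b C : ℝ} (hm : Measurable f)
    (hC : ∀ x ∈ Set.uIoc a b, |f x| ≤ C) : IntervalIntegrable f volume a b := by
  rw [intervalIntegrable_iff]
  have hfin : volume (Set.uIoc a b) < ⊤ := by
    rw [Set.uIoc]; exact measure_Ioc_lt_top
  have : IsFiniteMeasure (volume.restrict (Set.uIoc a b)) :=
    ⟨by rwa [Measure.restrict_apply_univ]⟩
  apply MeasureTheory.Integrable.mono' (integrable_const C) hm.aestronglyMeasurable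
  refine (ae_restrict_iff' measurableSet_uIoc).2 (ae_of_all _ fun x hx => ?_)
  simpa using hC x hx

lemma integral_lin (a b c d : ℝ) :
    (∫ x in a..b, (c - d*(1-x))) = (c-d)*(b-a) + d*(b^2-a^2)/2 := by
  have : (fun x => c - d*(1-x)) = fun x : ℝ => (c-d) + d*x := by funext x; ring
  rw [this, integral_add intervalIntegrable_const (intervalIntegrable_id.const_mul d),
    intervalIntegral.integral_const, intervalIntegral.integral_const_mul, integral_id]
  simp; ring

lemma integral_inv_one_sub (a b : ℝ) (ha : a < 1) (hb : b < 1) :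
    (∫ x in a..b, 1/(1-x)) = Real.log ((1-a)/(1-b)) := by
  have h := intervalIntegral.integral_comp_sub_left (fun u : ℝ => 1/u) 1 (a := a) (b := b)
  rw [h, integral_one_div (Set.notMem_uIcc_of_lt (by linarith) (by linarith)),
    Real.log_div (by linarith : (1:ℝ)-a ≠ 0) (by linarith : (1:ℝ)-b ≠ 0)]

lemma Topt_spec (S₀ S₁ t M : ℝ) (hS₀ : 0 < S₀) (hS₁ : S₀ < S₁) (hM : 1 < M) (ht : 0 < t)
    {x s : ℝ} (hx1 : x ≤ 1) (hs₀ : S₀ ≤ s) (hs₁ : s ≤ S₁) :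
    t*s - M*(1-x)*s^2 ≤ t * Topt S₀ S₁ t M x - M*(1-x)*(Topt S₀ S₁ t M x)^2 ∧
    (t*s - M*(1-x)*s^2 = t * Topt S₀ S₁ t M x - M*(1-x)*(Topt S₀ S₁ t M x)^2 →
      s = Topt S₀ S₁ t M x) := by
  have hM0 : 0 < M := by linarith
  have hS₁0 : 0 < S₁ := lt_trans hS₀ hS₁
  unfold Topt
  split_ifs with h1 h2
  · -- T = S₀
    have hd : 0 < t/(2*M*S₀) := by positivity
    have hxlt : x < 1 := by linarith
    have hkey : t ≤ (1-x)*(2*M*S₀) := (div_le_iff₀ (by positivity)).1 (by linarith)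
    have h3 : 0 ≤ M*(1-x)*(s-S₀) := by
      apply mul_nonneg (mul_nonneg hM0.le (by linarith)) (by linarith)
    have h4 : 0 ≤ M*(1-x)*(S₀+s) - t := by nlinarith
    constructor
    · nlinarith [mul_nonneg (by linarith : (0:ℝ) ≤ s - S₀) h4]
    · intro he
      by_contra hne
      have hgt : S₀ < s := lt_of_le_of_ne hs₀ (Ne.symm hne)
      have h3' : 0 < M*(1-x)*(s-S₀) := by
        apply mul_pos (mul_pos hM0 (by linarith)) (by linarith)
      have h4' : 0 < M*(1-x)*(S₀+s) - t := by nlinarith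
      nlinarith [mul_pos (by linarith : (0:ℝ) < s - S₀) h4']
  · -- T = t/(2M(1-x))
    have hd : 0 < t/(2*M*S₁) := by positivity
    have hu : 0 < 1 - x := by linarith
    set T := t / (2*M*(1-x)) with hTdef
    have hT : T * (2*M*(1-x)) = t := div_mul_cancel₀ _ (by positivity)
    have key : t*T - M*(1-x)*T^2 - (t*s - M*(1-x)*s^2) = M*(1-x)*(T-s)^2 := by
      linear_combination (s - T) * hT
    constructor
    · nlinarith [mul_nonneg (mul_nonneg hM0.le hu.le) (sq_nonneg (T-s))]
    · intro he
      have h0 : M*(1-x)*(T-s)^2 = 0 := by linarith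
      rcases mul_eq_zero.1 h0 with h | h
      · exact absurd h (ne_of_gt (mul_pos hM0 hu))
      · have := pow_eq_zero_iff (n := 2) (by norm_num) |>.1 h
        linarith [sub_eq_zero.1 this]
  · -- T = S₁
    have hu : 0 ≤ 1 - x := by linarith
    have hkey : (1-x)*(2*M*S₁) ≤ t := by
      have hx : 1 - t/(2*M*S₁) ≤ x := le_of_not_gt h2
      have : 1 - x ≤ t/(2*M*S₁) := by linarith
      exact (le_div_iff₀ (by positivity)).1 this
    have h3 : 0 ≤ M*(1-x)*(S₁-s) := by
      apply mul_nonneg (mul_nonneg hM0.le hu) (by linarith)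
    have h4 : 0 ≤ t - M*(1-x)*(S₁+s) := by nlinarith
    constructor
    · nlinarith [mul_nonneg (by linarith : (0:ℝ) ≤ S₁ - s) h4]
    · intro he
      by_contra hne
      have hlt : s < S₁ := lt_of_le_of_ne hs₁ hne
      -- t - M(1-x)(S₁+s) ≥ t(S₁-s)/(2S₁) > 0
      have h5 : M*(1-x)*(S₁+s)*(2*S₁) ≤ t*(S₁+s) := by nlinarith
      have h6 : t*(S₁-s) > 0 := mul_pos ht (by linarith)
      have h4' : 0 < t - M*(1-x)*(S₁+s) := by nlinarith
      nlinarith [mul_pos (by linarith : (0:ℝ) < S₁ - s) h4']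

lemma Topt_eq_Sopt (S₀ S₁ M : ℝ) (hS₀ : 0 < S₀) (hS₁ : S₀ < S₁) (hM : 0 < M) (x : ℝ) :
    Topt S₀ S₁ (M*S₀) M x = Sopt S₀ S₁ x := by
  have hS₁0 : 0 < S₁ := lt_trans hS₀ hS₁
  have e1 : 1 - M*S₀/(2*M*S₀) = 1/2 := by
    rw [show 2*M*S₀ = 2*(M*S₀) by ring, div_mul_eq_div_div_swap]
    rw [div_self (by positivity)]; norm_num
  have e2 : 1 - M*S₀/(2*M*S₁) = 1 - S₀/(2*S₁) := by
    have : M*S₀/(2*M*S₁) = S₀/(2*S₁) := by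
      field_simp
    rw [this]
  have e3 : M*S₀/(2*M*(1-x)) = S₀/(2*(1-x)) := by
    rw [show 2*M*(1-x) = M*(2*(1-x)) by ring, mul_div_mul_left _ _ (ne_of_gt hM)]
  unfold Topt Sopt
  rw [e1, e2, e3]


section PhiInt
variable (S₀ S₁ t M : ℝ)

noncomputable def phi (x : ℝ) : ℝ := t * Topt S₀ S₁ t M x - M*(1-x)*(Topt S₀ S₁ t M x)^2

lemma phi_integrable (hS₀ : 0 < S₀) (hS₁ : S₀ < S₁) (hM : 1 < M) (ht : 0 < t)
    {a b : ℝ} (ha : a ∈ Set.Icc (0:ℝ) 1) (hb : b ∈ Set.Icc (0:ℝ) 1) :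
    IntervalIntegrable (phi S₀ S₁ t M) volume a b := by
  have hS₁0 : 0 < S₁ := lt_trans hS₀ hS₁
  have hmem : ∀ x, S₀ ≤ Topt S₀ S₁ t M x ∧ Topt S₀ S₁ t M x ≤ S₁ := by
    intro x
    unfold Topt
    split_ifs with h1 h2
    · exact ⟨le_refl _, hS₁.le⟩
    · have hd : 0 < t/(2*M*S₁) := by positivity
      have hu : 0 < 1 - x := by linarith
      have hlow : (1-x)*(2*M*S₀) < t := by
        have h' : 1 - x < t/(2*M*S₀) := by linarith [lt_of_not_ge h1]
        exact (lt_div_iff₀ (by positivity)).1 h'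
      have hhigh : t < (1-x)*(2*M*S₁) := by
        have h' : t/(2*M*S₁) < 1 - x := by linarith
        exact (div_lt_iff₀ (by positivity)).1 h'
      constructor
      · rw [le_div_iff₀ (by positivity)]; nlinarith
      · rw [div_le_iff₀ (by positivity)]; nlinarith
    · exact ⟨hS₁.le, le_refl _⟩
  apply intervalIntegrable_of_bdd (C := t*S₁ + M*S₁^2)
  · unfold phi
    apply Measurable.sub (measurable_const.mul (Topt_measurable _ _ _ _))
    apply Measurable.mul (by fun_prop)
    exact (Topt_measurable _ _ _ _).pow_const 2
  · intro x hx
    have hxI : x ∈ Set.Icc (0:ℝ) 1 := by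
      constructor
      · exact le_of_lt (lt_of_le_of_lt (le_min ha.1 hb.1) hx.1)
      · exact le_trans hx.2 (max_le ha.2 hb.2)
    obtain ⟨hT1, hT2⟩ := hmem x
    have hT0 : 0 < Topt S₀ S₁ t M x := lt_of_lt_of_le hS₀ hT1
    have hu0 : 0 ≤ 1 - x := by linarith [hxI.2]
    have hu1 : 1 - x ≤ 1 := by linarith [hxI.1]
    unfold phi
    rw [abs_le]
    constructor
    · have hTsq : (Topt S₀ S₁ t M x)^2 ≤ S₁^2 := by nlinarith
      have : M*(1-x)*(Topt S₀ S₁ t M x)^2 ≤ M*S₁^2 := by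
        nlinarith [mul_nonneg (mul_nonneg (by linarith : (0:ℝ) ≤ M) hxI.1) (sq_nonneg (Topt S₀ S₁ t M x)),
          mul_nonneg (by linarith : (0:ℝ) ≤ M) (sub_nonneg.2 hTsq)]
      nlinarith [mul_nonneg ht.le hT0.le]
    · have h1 : t * Topt S₀ S₁ t M x ≤ t*S₁ := by nlinarith
      nlinarith [mul_nonneg (mul_nonneg (by linarith : (0:ℝ) ≤ M) hu0) (sq_nonneg (Topt S₀ S₁ t M x))]

lemma integral_phi_A (hS₀ : 0 < S₀) (hS₁ : S₀ < S₁) (hM : 1 < M) (ht : 0 < t)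
    (htA : t ≤ 2*M*S₀) :
    (∫ x in (0:ℝ)..1, phi S₀ S₁ t M x)
      = t*S₀ - M*S₀^2/2 + t^2*Real.log (S₁/S₀)/(4*M) := by
  have hM0 : 0 < M := by linarith
  have hS₁0 : 0 < S₁ := lt_trans hS₀ hS₁
  set x₀ : ℝ := 1 - t/(2*M*S₀) with hx₀def
  set x₁ : ℝ := 1 - t/(2*M*S₁) with hx₁def
  have hd₀ : 0 < t/(2*M*S₀) := by positivity
  have hd₁ : 0 < t/(2*M*S₁) := by positivity
  have hx₀0 : 0 ≤ x₀ := by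
    have : t/(2*M*S₀) ≤ 1 := (div_le_one (by positivity)).2 htA
    simp [hx₀def]; linarith
  have hx₀x₁ : x₀ < x₁ := by
    have : t/(2*M*S₁) < t/(2*M*S₀) := by
      apply div_lt_div_of_pos_left ht (by positivity)
      nlinarith
    simp only [hx₀def, hx₁def]; linarith
  have hx₁1 : x₁ < 1 := by simp only [hx₁def]; linarith
  have hx₀I : x₀ ∈ Set.Icc (0:ℝ) 1 := ⟨hx₀0, by linarith⟩
  have hx₁I : x₁ ∈ Set.Icc (0:ℝ) 1 := ⟨by linarith, by linarith⟩
  have h0I : (0:ℝ) ∈ Set.Icc (0:ℝ) 1 := by norm_num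
  have h1I : (1:ℝ) ∈ Set.Icc (0:ℝ) 1 := by norm_num
  have hsplit1 := integral_add_adjacent_intervals
    (phi_integrable S₀ S₁ t M hS₀ hS₁ hM ht h0I hx₀I)
    (phi_integrable S₀ S₁ t M hS₀ hS₁ hM ht hx₀I hx₁I)
  have hsplit2 := integral_add_adjacent_intervals
    (phi_integrable S₀ S₁ t M hS₀ hS₁ hM ht h0I hx₁I)
    (phi_integrable S₀ S₁ t M hS₀ hS₁ hM ht hx₁I h1I)
  have p1 : (∫ x in (0:ℝ)..x₀, phi S₀ S₁ t M x)
      = ∫ x in (0:ℝ)..x₀, (t*S₀ - (M*S₀^2)*(1-x)) := by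
    apply integral_congr
    intro x hx
    rw [Set.uIcc_of_le hx₀0] at hx
    unfold phi Topt
    rw [if_pos hx.2]; ring
  have p2 : (∫ x in x₀..x₁, phi S₀ S₁ t M x)
      = ∫ x in x₀..x₁, (t^2/(4*M)) * (1/(1-x)) := by
    apply integral_congr
    intro x hx
    rw [Set.uIcc_of_le hx₀x₁.le] at hx
    unfold phi Topt
    split_ifs with h1 h2
    · have hxeq : x = 1 - t/(2*M*S₀) := le_antisymm h1 (by rw [← hx₀def]; exact hx.1)
      subst hxeq
      field_simp
      ring_nf; rw [pow_two, mul_assoc t t, mul_inv_cancel₀ ht.ne', mul_one]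
    · have hu : (0:ℝ) < 1 - x := by linarith
      have hu' : (1:ℝ) - x ≠ 0 := ne_of_gt hu
      field_simp
      ring
    · have hxeq : x = 1 - t/(2*M*S₁) := le_antisymm (by rw [← hx₁def]; exact hx.2) (not_lt.1 h2)
      subst hxeq
      field_simp
      ring_nf; rw [pow_two, mul_assoc t t, mul_inv_cancel₀ ht.ne', mul_one]
  have p3 : (∫ x in x₁..(1:ℝ), phi S₀ S₁ t M x)
      = ∫ x in x₁..(1:ℝ), (t*S₁ - (M*S₁^2)*(1-x)) := by
    apply integral_congr
    intro x hx
    rw [Set.uIcc_of_le hx₁1.le] at hx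
    have hx1 : 1 - t/(2*M*S₁) ≤ x := by rw [← hx₁def]; exact hx.1
    have hx0 : (1 - t/(2*M*S₀)) < x :=
      lt_of_lt_of_le (by rw [← hx₀def, ← hx₁def]; exact hx₀x₁) hx1
    unfold phi Topt
    rw [if_neg (not_le.2 hx0), if_neg (not_lt.2 hx1)]
    ring
  have p2v : (∫ x in x₀..x₁, phi S₀ S₁ t M x) = t^2/(4*M) * Real.log (S₁/S₀) := by
    rw [p2, intervalIntegral.integral_const_mul, integral_inv_one_sub x₀ x₁ (by linarith) (by linarith)]
    have harg : (1 - x₀)/(1 - x₁) = S₁/S₀ := by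
      rw [hx₀def, hx₁def,
        show (1:ℝ) - (1 - t/(2*M*S₀)) = t/(2*M*S₀) by ring,
        show (1:ℝ) - (1 - t/(2*M*S₁)) = t/(2*M*S₁) by ring]
      rw [div_div_div_eq]
      rw [div_eq_div_iff (by positivity) (by positivity)]
      ring
    rw [harg]
  rw [← hsplit2, ← hsplit1, p1, p3, p2v, integral_lin, integral_lin, hx₀def, hx₁def]
  field_simp
  ring

lemma integral_phi_B (hS₀ : 0 < S₀) (hS₁ : S₀ < S₁) (hM : 1 < M) (ht : 0 < t)
    (htB : 2*M*S₀ < t) (htB2 : t < 2*M*S₁) :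
    (∫ x in (0:ℝ)..1, phi S₀ S₁ t M x)
      = t^2/(4*M) * Real.log (2*M*S₁/t) + 3*t^2/(8*M) := by
  have hM0 : 0 < M := by linarith
  have hS₁0 : 0 < S₁ := lt_trans hS₀ hS₁
  set x₁ : ℝ := 1 - t/(2*M*S₁) with hx₁def
  have hd₁ : 0 < t/(2*M*S₁) := by positivity
  have hx₁0 : 0 < x₁ := by
    have : t/(2*M*S₁) < 1 := (div_lt_one (by positivity)).2 htB2
    rw [hx₁def]; linarith
  have hx₁1 : x₁ < 1 := by rw [hx₁def]; linarith
  have hx₀neg : 1 - t/(2*M*S₀) < 0 := by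
    have : 1 < t/(2*M*S₀) := (one_lt_div (by positivity)).2 htB
    linarith
  have hx₁I : x₁ ∈ Set.Icc (0:ℝ) 1 := ⟨hx₁0.le, hx₁1.le⟩
  have h0I : (0:ℝ) ∈ Set.Icc (0:ℝ) 1 := by norm_num
  have h1I : (1:ℝ) ∈ Set.Icc (0:ℝ) 1 := by norm_num
  have hsplit := integral_add_adjacent_intervals
    (phi_integrable S₀ S₁ t M hS₀ hS₁ hM ht h0I hx₁I)
    (phi_integrable S₀ S₁ t M hS₀ hS₁ hM ht hx₁I h1I)
  have p1 : (∫ x in (0:ℝ)..x₁, phi S₀ S₁ t M x)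
      = ∫ x in (0:ℝ)..x₁, (t^2/(4*M)) * (1/(1-x)) := by
    apply integral_congr
    intro x hx
    rw [Set.uIcc_of_le hx₁0.le] at hx
    unfold phi Topt
    rw [if_neg (not_le.2 (lt_of_lt_of_le hx₀neg hx.1))]
    split_ifs with h2
    · have hu : (0:ℝ) < 1 - x := by linarith
      have hu' : (1:ℝ) - x ≠ 0 := ne_of_gt hu
      field_simp
      ring
    · have hxeq : x = 1 - t/(2*M*S₁) := le_antisymm (by rw [← hx₁def]; exact hx.2) (not_lt.1 h2)
      subst hxeq
      field_simp
      ring_nf; rw [pow_two, mul_assoc t t, mul_inv_cancel₀ ht.ne', mul_one]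
  have p3 : (∫ x in x₁..(1:ℝ), phi S₀ S₁ t M x)
      = ∫ x in x₁..(1:ℝ), (t*S₁ - (M*S₁^2)*(1-x)) := by
    apply integral_congr
    intro x hx
    rw [Set.uIcc_of_le hx₁1.le] at hx
    have hx1 : 1 - t/(2*M*S₁) ≤ x := by rw [← hx₁def]; exact hx.1
    unfold phi Topt
    rw [if_neg (not_le.2 (lt_of_lt_of_le hx₀neg (le_trans hx₁0.le hx.1))),
      if_neg (not_lt.2 hx1)]
    ring
  have p1v : (∫ x in (0:ℝ)..x₁, phi S₀ S₁ t M x) = t^2/(4*M) * Real.log (2*M*S₁/t) := by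
    rw [p1, intervalIntegral.integral_const_mul, integral_inv_one_sub 0 x₁ (by norm_num) (by linarith)]
    have harg : ((1:ℝ) - 0)/(1 - x₁) = 2*M*S₁/t := by
      rw [hx₁def, show (1:ℝ) - (1 - t/(2*M*S₁)) = t/(2*M*S₁) by ring]
      rw [sub_zero, one_div_div]
    rw [harg]
  rw [← hsplit, p1v, p3, integral_lin, hx₁def]
  field_simp
  ring
end PhiInt

theorem maximizer_unique_ae (S₀ S₁ : ℝ) (hS₀ : 0 < S₀) (hS₀S₁ : S₀ < S₁)
    (S : ℝ → ℝ) (hmeas : Measurable S)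
    (hbound : ∀ x ∈ Set.Icc (0:ℝ) 1, S₀ ≤ S x ∧ S x ≤ S₁)
    (heq : (1/2) * (∫ x in (0:ℝ)..1, S x)^2 =
      (1 + (1/2) * Real.log (S₁ / S₀)) * ∫ x in (0:ℝ)..1, (1 - x) * (S x)^2) :
    ∀ᵐ x ∂(MeasureTheory.volume.restrict (Set.Icc (0:ℝ) 1)), S x = Sopt S₀ S₁ x := by
  have hS₁0 : 0 < S₁ := lt_trans hS₀ hS₀S₁
  obtain ⟨L, hLdef⟩ : ∃ L, Real.log (S₁/S₀) = L := ⟨_, rfl⟩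
  have hL : 0 < L := by rw [← hLdef]; exact Real.log_pos ((one_lt_div hS₀).2 hS₀S₁)
  obtain ⟨M, hMdef⟩ : ∃ M, 1 + (1/2)*L = M := ⟨_, rfl⟩
  have hM : 1 < M := by rw [← hMdef]; linarith
  have hM0 : 0 < M := by linarith
  have hLM : L = 2*M - 2 := by rw [← hMdef]; ring
  obtain ⟨t, htdef⟩ : ∃ t, (∫ x in (0:ℝ)..1, S x) = t := ⟨_, rfl⟩
  rw [hLdef, hMdef, htdef] at heq
  have hSb : ∀ x ∈ Set.uIoc (0:ℝ) 1, |S x| ≤ S₁ := by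
    intro x hx
    rw [Set.uIoc_of_le (by norm_num : (0:ℝ) ≤ 1)] at hx
    obtain ⟨h1, h2⟩ := hbound x ⟨hx.1.le, hx.2⟩
    rw [abs_le]; constructor <;> linarith
  have hSint : IntervalIntegrable S volume 0 1 := intervalIntegrable_of_bdd hmeas hSb
  have hSsqint : IntervalIntegrable (fun x => (1-x)*(S x)^2) volume 0 1 := by
    apply intervalIntegrable_of_bdd (C := S₁^2)
      (by fun_prop : Measurable fun x : ℝ => (1-x)*(S x)^2)
    intro x hx
    rw [Set.uIoc_of_le (by norm_num : (0:ℝ) ≤ 1)] at hx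
    obtain ⟨h1, h2⟩ := hbound x ⟨hx.1.le, hx.2⟩
    have hx1 : 0 ≤ 1 - x := by linarith [hx.2]
    have hx2 : 1 - x ≤ 1 := by linarith [hx.1]
    rw [abs_of_nonneg (mul_nonneg hx1 (sq_nonneg _))]
    nlinarith
  have ht₀ : S₀ ≤ t := by
    rw [← htdef]
    have h := integral_mono_on (by norm_num : (0:ℝ) ≤ 1) intervalIntegrable_const hSint
      (fun x hx => (hbound x hx).1)
    simpa using h
  have ht₁ : t ≤ S₁ := by
    rw [← htdef]
    have h := integral_mono_on (by norm_num : (0:ℝ) ≤ 1) hSint intervalIntegrable_const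
      (fun x hx => (hbound x hx).2)
    simpa using h
  have ht : 0 < t := lt_of_lt_of_le hS₀ ht₀
  have hMD : M * (∫ x in (0:ℝ)..1, (1-x)*(S x)^2) = t^2/2 := by
    linarith [heq]
  have hker : (fun x => M*(1-x)*(S x)^2) = (fun x : ℝ => M*((1-x)*(S x)^2)) := by
    funext x; ring
  have hker2 : IntervalIntegrable (fun x => M*(1-x)*(S x)^2) volume 0 1 := by
    rw [hker]; exact hSsqint.const_mul M
  have h0I : (0:ℝ) ∈ Set.Icc (0:ℝ) 1 := by norm_num
  have h1I : (1:ℝ) ∈ Set.Icc (0:ℝ) 1 := by norm_num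
  have hphiint := phi_integrable S₀ S₁ t M hS₀ hS₀S₁ hM ht h0I h1I
  have hsecond : (∫ x in (0:ℝ)..1, (t * S x - M*(1-x)*(S x)^2)) = t^2/2 := by
    rw [integral_sub (hSint.const_mul t) hker2, intervalIntegral.integral_const_mul, hker,
      intervalIntegral.integral_const_mul, htdef, hMD]
    ring
  have hIg : (∫ x in (0:ℝ)..1, (phi S₀ S₁ t M x - (t * S x - M*(1-x)*(S x)^2)))
      = (∫ x in (0:ℝ)..1, phi S₀ S₁ t M x) - t^2/2 := by
    rw [integral_sub hphiint ((hSint.const_mul t).sub hker2), hsecond]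
  have hgnonneg : ∀ x ∈ Set.Icc (0:ℝ) 1,
      0 ≤ phi S₀ S₁ t M x - (t * S x - M*(1-x)*(S x)^2) := by
    intro x hx
    have h := (Topt_spec S₀ S₁ t M hS₀ hS₀S₁ hM ht hx.2 (hbound x hx).1 (hbound x hx).2).1
    unfold phi
    linarith
  have hIgpos : 0 ≤ ∫ x in (0:ℝ)..1, (phi S₀ S₁ t M x - (t * S x - M*(1-x)*(S x)^2)) :=
    intervalIntegral.integral_nonneg (by norm_num) hgnonneg
  -- rule out the regime t > 2*M*S₀
  have htA : t ≤ 2*M*S₀ := by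
    by_contra htB
    push_neg at htB
    have htB2 : t < 2*M*S₁ := by nlinarith
    rw [hIg, integral_phi_B S₀ S₁ t M hS₀ hS₀S₁ hM ht htB htB2] at hIgpos
    have hlog : Real.log (2*M*S₁/t) < L := by
      rw [← hLdef]
      apply Real.log_lt_log (by positivity)
      rw [div_lt_div_iff₀ (by positivity) hS₀]
      nlinarith
    have h1 : (0:ℝ) < t^2/(4*M) := by positivity
    have h2 : t^2/(4*M) * Real.log (2*M*S₁/t) < t^2/(4*M) * (2*M-2) := by
      apply mul_lt_mul_of_pos_left _ h1
      linarith
    have h3 : t^2/(4*M)*(2*M-2) + 3*t^2/(8*M) - t^2/2 = -(t^2/(8*M)) := by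
      field_simp; ring
    have h4 : (0:ℝ) < t^2/(8*M) := by positivity
    linarith
  -- regime A: exact value
  rw [hIg, integral_phi_A S₀ S₁ t M hS₀ hS₀S₁ hM ht htA, hLdef] at hIgpos
  have hquad : t*S₀ - M*S₀^2/2 + t^2*L/(4*M) - t^2/2 = -((t - M*S₀)^2/(2*M)) := by
    rw [hLM]; field_simp; ring
  have htM : t = M*S₀ := by
    rw [hquad] at hIgpos
    have h' : (t - M*S₀)^2/(2*M) ≤ 0 := by linarith
    have h'' := mul_le_mul_of_nonneg_left h' (by linarith : (0:ℝ) ≤ 2*M)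
    have hid : 2*M*((t-M*S₀)^2/(2*M)) = (t-M*S₀)^2 := by field_simp
    have h2 : (t - M*S₀)^2 = 0 := le_antisymm (by linarith) (sq_nonneg _)
    have := pow_eq_zero_iff (n := 2) (by norm_num) |>.1 h2
    linarith [sub_eq_zero.1 this]
  have hIg0 : (∫ x in (0:ℝ)..1, (phi S₀ S₁ t M x - (t * S x - M*(1-x)*(S x)^2))) = 0 := by
    rw [hIg, integral_phi_A S₀ S₁ t M hS₀ hS₀S₁ hM ht htA, hLdef, hquad, htM]
    simp
  -- zero integral of a.e.-nonneg function ⇒ zero a.e.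
  set g : ℝ → ℝ := fun x => phi S₀ S₁ t M x - (t * S x - M*(1-x)*(S x)^2) with hgdef
  have hgmeas : Measurable g := by
    rw [hgdef]
    unfold phi
    apply Measurable.sub
    · apply Measurable.sub (measurable_const.mul (Topt_measurable _ _ _ _))
      exact (measurable_const.mul (measurable_const.sub measurable_id)).mul
        ((Topt_measurable _ _ _ _).pow_const 2)
    · apply Measurable.sub (measurable_const.mul hmeas)
      exact (measurable_const.mul (measurable_const.sub measurable_id)).mul
        (hmeas.pow_const 2)
  have hgint : IntervalIntegrable g volume 0 1 := hphiint.sub ((hSint.const_mul t).sub hker2)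
  have hIoc : (∫ x in Set.Ioc (0:ℝ) 1, g x ∂volume) = 0 := by
    rw [← intervalIntegral.integral_of_le (by norm_num : (0:ℝ) ≤ 1)]
    exact hIg0
  have hgintOn : Integrable g (volume.restrict (Set.Ioc (0:ℝ) 1)) := by
    rw [intervalIntegrable_iff_integrableOn_Ioc_of_le (by norm_num : (0:ℝ) ≤ 1)] at hgint
    exact hgint
  have hgae0 : 0 ≤ᵐ[volume.restrict (Set.Ioc (0:ℝ) 1)] g := by
    refine (ae_restrict_iff' measurableSet_Ioc).2 (ae_of_all _ fun x hx => ?_)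
    exact hgnonneg x ⟨hx.1.le, hx.2⟩
  have hae : g =ᵐ[volume.restrict (Set.Ioc (0:ℝ) 1)] 0 :=
    (MeasureTheory.integral_eq_zero_iff_of_nonneg_ae hgae0 hgintOn).1 hIoc
  have hae2 : g =ᵐ[volume.restrict (Set.Icc (0:ℝ) 1)] 0 := by
    rwa [Measure.restrict_congr_set Ioc_ae_eq_Icc] at hae
  filter_upwards [hae2, ae_restrict_mem measurableSet_Icc] with x hgx hx
  have heqp := (Topt_spec S₀ S₁ t M hS₀ hS₀S₁ hM ht hx.2 (hbound x hx).1 (hbound x hx).2).2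
  have hST : S x = Topt S₀ S₁ t M x := by
    apply heqp
    have hgx' : phi S₀ S₁ t M x - (t * S x - M*(1-x)*(S x)^2) = 0 := hgx
    unfold phi at hgx'
    linarith
  rw [hST, htM]
  exact Topt_eq_Sopt S₀ S₁ M hS₀ hS₀S₁ hM0 x
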